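/- Let T > 0 and α ≥ 2/T, and let u(t) = e^{−αt} + e^{−α(T−t)} be the symmetric mode. Then there exist continuous functions v, w : [0,T] → ℝ and a finite set S ⊂ (0,T) such that: v(0) = v(T) = w(0) = w(T) = 0; for every t ∈ (0,T) \ S, v is differentiable at t with v′(t) = u(t) − w(t) and w is differentiable at t; and, denoting by w′ the (a.e. defined) derivative of w, the following bounds hold: ∫₀^T v(t)² dt ≤ (1/(30α²)) ∫₀^T u(t)² dt; ∫₀^T (u(t) − w(t))² dt ≤ (1 + 1/√3)² ∫₀^T u(t)² dt; ∫₀^T w(t)² dt ≤ (1 + 1/√3)² ∫₀^T u(t)² dt; and ∫₀^T w′(t)² dt ≤ α² (5 + √2)² ∫₀^T u(t)² dt. -/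

import Mathlib

open Real MeasureTheory

private lemma hasDerivAt_if_le {δ : ℝ} {p q : ℝ → ℝ} (hp : ∀ s, HasDerivAt p (q s) s) {t : ℝ}
    (ht : t ≠ δ) :
    HasDerivAt (fun s => if s ≤ δ then p s else 0) (if t ≤ δ then q t else 0) t := by
  rcases ht.lt_or_gt with h | h
  · rw [if_pos h.le]
    refine (hp t).congr_of_eventuallyEq ?_
    filter_upwards [Iio_mem_nhds h] with s hs
    rw [if_pos (le_of_lt hs)]
  · rw [if_neg (not_le.2 h)]
    refine (hasDerivAt_const t (0:ℝ)).congr_of_eventuallyEq ?_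
    filter_upwards [Ioi_mem_nhds h] with s hs
    rw [if_neg (not_le.2 hs)]

private lemma integral_congr_off_two {f g : ℝ → ℝ} {a b c d : ℝ}
    (h : ∀ x ∈ Set.uIoc a b, x ≠ c → x ≠ d → f x = g x) :
    (∫ x in a..b, f x) = ∫ x in a..b, g x := by
  apply intervalIntegral.integral_congr_ae
  have hc : ∀ᵐ x : ℝ, x ≠ c := by
    refine (MeasureTheory.ae_iff).2 ?_
    simp [Set.setOf_eq_eq_singleton]
  have hd : ∀ᵐ x : ℝ, x ≠ d := by
    refine (MeasureTheory.ae_iff).2 ?_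
    simp [Set.setOf_eq_eq_singleton]
  filter_upwards [hc, hd] with x hxc hxd hx
  exact h x hx hxc hxd

private lemma integral_poly8 (b c0 c1 c2 c3 c4 c5 c6 c7 c8 : ℝ) :
    (∫ t in (0:ℝ)..b, (c0 + c1*t + c2*t^2 + c3*t^3 + c4*t^4 + c5*t^5 + c6*t^6 + c7*t^7 + c8*t^8))
      = c0*b + c1*b^2/2 + c2*b^3/3 + c3*b^4/4 + c4*b^5/5 + c5*b^6/6 + c6*b^7/7 + c7*b^8/8
        + c8*b^9/9 := by
  have h : ∀ t : ℝ, HasDerivAt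
      (fun t : ℝ => c0*t + c1*t^2/2 + c2*t^3/3 + c3*t^4/4 + c4*t^5/5 + c5*t^6/6 + c6*t^7/7
        + c7*t^8/8 + c8*t^9/9)
      (c0 + c1*t + c2*t^2 + c3*t^3 + c4*t^4 + c5*t^5 + c6*t^6 + c7*t^7 + c8*t^8) t := by
    intro t
    have H : ∀ n : ℕ, HasDerivAt (fun t : ℝ => t^n) (n * t^(n-1)) t := fun n => hasDerivAt_pow n t
    have h1 := (hasDerivAt_id t).const_mul c0
    have h2 := ((H 2).const_mul c1).div_const 2
    have h3 := ((H 3).const_mul c2).div_const 3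
    have h4 := ((H 4).const_mul c3).div_const 4
    have h5 := ((H 5).const_mul c4).div_const 5
    have h6 := ((H 6).const_mul c5).div_const 6
    have h7 := ((H 7).const_mul c6).div_const 7
    have h8 := ((H 8).const_mul c7).div_const 8
    have h9 := ((H 9).const_mul c8).div_const 9
    have hsum := (((((((h1.add h2).add h3).add h4).add h5).add h6).add h7).add h8).add h9
    exact hsum.congr_deriv (by norm_num <;> ring)
  rw [intervalIntegral.integral_eq_sub_of_hasDerivAt (fun x _ => h x)
    ((Continuous.intervalIntegrable (by fun_prop) _ _))]
  ring

private lemma sqrt3_fact : (2.487:ℝ) ≤ (1 + 1/Real.sqrt 3)^2 := by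
  have hsq : Real.sqrt 3 ^ 2 = 3 := Real.sq_sqrt (by norm_num)
  have hpos : 0 < Real.sqrt 3 := Real.sqrt_pos.2 (by norm_num)
  have hup : Real.sqrt 3 ≤ 1.7321 := by nlinarith [sq_nonneg (Real.sqrt 3 - 1.7321)]
  have hinv : (0.5773:ℝ) ≤ 1/Real.sqrt 3 := by
    rw [le_div_iff₀ hpos]; nlinarith
  nlinarith

private lemma sqrt2_fact : (41.1:ℝ) ≤ (5 + Real.sqrt 2)^2 := by
  have hsq : Real.sqrt 2 ^ 2 = 2 := Real.sq_sqrt (by norm_num)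
  have hpos : 0 < Real.sqrt 2 := Real.sqrt_pos.2 (by norm_num)
  have hlow : (1.414:ℝ) ≤ Real.sqrt 2 := by nlinarith
  nlinarith

private lemma sqrt2_pos : (0:ℝ) < 5 + Real.sqrt 2 := by
  nlinarith [Real.sqrt_nonneg 2]

set_option maxHeartbeats 4000000 in
/-- Decomposition `u = v̇ + w` with Dirichlet boundary conditions in time for high
symmetric modes `u(t) = e^{−αt} + e^{−α(T−t)}` with `α ≥ 2/T`, together with the
quantitative `L²` bounds of Case 4 of the divergence lemma. -/
theorem symmetric_mode_decomposition (T α : ℝ) (hT : 0 < T) (hα : 2/T ≤ α)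
    (u : ℝ → ℝ) (hu : u = fun t => Real.exp (-α*t) + Real.exp (-α*(T-t))) :
    ∃ (v w : ℝ → ℝ) (S : Finset ℝ), ↑S ⊆ Set.Ioo (0:ℝ) T ∧
      ContinuousOn v (Set.Icc 0 T) ∧ ContinuousOn w (Set.Icc 0 T) ∧
      v 0 = 0 ∧ v T = 0 ∧ w 0 = 0 ∧ w T = 0 ∧
      (∀ t ∈ Set.Ioo (0:ℝ) T \ ↑S,
        HasDerivAt v (u t - w t) t ∧ DifferentiableAt ℝ w t) ∧
      (∫ t in (0:ℝ)..T, (v t)^2)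
        ≤ 1/(30*α^2) * ∫ t in (0:ℝ)..T, (u t)^2 ∧
      (∫ t in (0:ℝ)..T, (u t - w t)^2)
        ≤ (1 + 1/Real.sqrt 3)^2 * ∫ t in (0:ℝ)..T, (u t)^2 ∧
      (∫ t in (0:ℝ)..T, (w t)^2)
        ≤ (1 + 1/Real.sqrt 3)^2 * ∫ t in (0:ℝ)..T, (u t)^2 ∧
      (∫ t in (0:ℝ)..T, (deriv w t)^2)
        ≤ α^2 * (5 + Real.sqrt 2)^2 * ∫ t in (0:ℝ)..T, (u t)^2 := by
  have hα0 : 0 < α := lt_of_lt_of_le (by positivity) hα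
  have hαT : 2 ≤ α * T := by
    rw [div_le_iff₀ hT] at hα; linarith
  set δ : ℝ := 1/(2*α) with hδdef
  have hδ0 : 0 < δ := by positivity
  have h2αδ : 2*α*δ = 1 := by rw [hδdef]; field_simp
  have h4δ : 4*δ ≤ T := by
    have : 4*δ = 2/α := by rw [hδdef]; field_simp; ring
    rw [this, div_le_iff₀ hα0]; linarith
  have hδT : 2*δ < T := by linarith
  have hδltT : δ < T := by linarith
  set A : ℝ := 1 + Real.exp (-α*T) with hAdef
  have hA1 : 1 ≤ A := by
    have := Real.exp_pos (-α*T); rw [hAdef]; linarith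
  -- numeric exp bounds
  have hexp1 : (2.7182818283 : ℝ) < Real.exp 1 := Real.exp_one_gt_d9
  have hexpαT : Real.exp (-α*T) ≤ 1/7 := by
    have h1 : Real.exp (-α*T) ≤ Real.exp (-2) := by
      apply Real.exp_le_exp.2; linarith
    have h2 : (7:ℝ) ≤ Real.exp 2 := by
      have : Real.exp 1 ^ (2:ℕ) = Real.exp 2 := by
        rw [Real.exp_one_pow]; norm_num
      nlinarith [Real.exp_pos 1]
    have h3 : Real.exp (-2 : ℝ) ≤ 1/7 := by
      rw [Real.exp_neg]
      rw [inv_le_comm₀ (by positivity) (by norm_num)]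
      simpa using h2
    linarith
  have hA2 : A^2 ≤ 64/49 := by
    have : A ≤ 8/7 := by rw [hAdef]; linarith
    nlinarith
  have hA0 : 0 < A := by linarith
  -- the building blocks
  set φ : ℝ → ℝ := fun t => if t ≤ δ then t*(1-2*α*t)^3 else 0 with hφdef
  set φ₁ : ℝ → ℝ := fun t => if t ≤ δ then (1-2*α*t)^2*(1-8*α*t) else 0 with hφ₁def
  set ψ : ℝ → ℝ := fun t => if t ≤ δ then (-12*α)*((1-2*α*t)*(1-4*α*t)) else 0 with hψdef
  set v : ℝ → ℝ := fun t => A * (φ t - φ (T - t)) with hvdef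
  set w : ℝ → ℝ := fun t => u t - A * (φ₁ t + φ₁ (T - t)) with hwdef
  set D : ℝ → ℝ := fun t => (α*(Real.exp (-α*(T-t)) - Real.exp (-α*t))) - A * (ψ t - ψ (T - t))
    with hDdef
  -- derivative formulas for the polynomial pieces
  have hlin : ∀ s : ℝ, HasDerivAt (fun s : ℝ => 1-2*α*s) (-(2*α)) s := by
    intro s
    simpa using ((hasDerivAt_id s).const_mul (2*α)).const_sub 1
  have hlin8 : ∀ s : ℝ, HasDerivAt (fun s : ℝ => 1-8*α*s) (-(8*α)) s := by
    intro s
    simpa using ((hasDerivAt_id s).const_mul (8*α)).const_sub 1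
  have hder_φ : ∀ s : ℝ, HasDerivAt (fun s => s*(1-2*α*s)^3) ((1-2*α*s)^2*(1-8*α*s)) s := by
    intro s
    have := (hasDerivAt_id s).mul ((hlin s).pow 3)
    exact this.congr_deriv (by norm_num <;> ring)
  have hder_φ₁ : ∀ s : ℝ, HasDerivAt (fun s => (1-2*α*s)^2*(1-8*α*s))
      ((-12*α)*((1-2*α*s)*(1-4*α*s))) s := by
    intro s
    have := ((hlin s).pow 2).mul (hlin8 s)
    exact this.congr_deriv (by norm_num <;> ring)
  have hφ' : ∀ t : ℝ, t ≠ δ → HasDerivAt φ (φ₁ t) t := by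
    intro t ht
    exact hasDerivAt_if_le hder_φ ht
  have hφ₁' : ∀ t : ℝ, t ≠ δ → HasDerivAt φ₁ (ψ t) t := by
    intro t ht
    exact hasDerivAt_if_le hder_φ₁ ht
  have hsub : ∀ t : ℝ, HasDerivAt (fun s : ℝ => T - s) (-1) t := by
    intro t; simpa using (hasDerivAt_id t).const_sub T
  have hφc : ∀ t : ℝ, T - t ≠ δ → HasDerivAt (fun s => φ (T - s)) (-(φ₁ (T - t))) t := by
    intro t ht
    have := (hφ' (T - t) ht).comp t (hsub t)
    simpa [Function.comp_def] using this
  have hφ₁c : ∀ t : ℝ, T - t ≠ δ → HasDerivAt (fun s => φ₁ (T - s)) (-(ψ (T - t))) t := by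
    intro t ht
    have := (hφ₁' (T - t) ht).comp t (hsub t)
    simpa [Function.comp_def] using this
  -- derivative of u
  have hder_u : ∀ t : ℝ, HasDerivAt u (α*(Real.exp (-α*(T-t)) - Real.exp (-α*t))) t := by
    intro t
    have e1 : HasDerivAt (fun t : ℝ => Real.exp (-α*t)) (Real.exp (-α*t) * (-α)) t := by
      have hi : HasDerivAt (fun t : ℝ => -α*t) (-α) t := by
        simpa using (hasDerivAt_id t).const_mul (-α)
      exact (Real.hasDerivAt_exp (-α*t)).comp t hi
    have e2 : HasDerivAt (fun t : ℝ => Real.exp (-α*(T-t))) (Real.exp (-α*(T-t)) * (-α * -1)) t := by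
      have hi : HasDerivAt (fun t : ℝ => -α*(T-t)) (-α * -1) t := by
        exact (hsub t).const_mul (-α)
      exact (Real.hasDerivAt_exp (-α*(T-t))).comp t hi
    rw [hu]
    exact (e1.add e2).congr_deriv (by ring)
  -- v and w derivatives
  have hv' : ∀ t : ℝ, t ≠ δ → T - t ≠ δ → HasDerivAt v (A * (φ₁ t + φ₁ (T - t))) t := by
    intro t h1 h2
    have h3 := ((hφ' t h1).sub (hφc t h2)).const_mul A
    have heq : A * (φ₁ t + φ₁ (T - t)) = A * (φ₁ t - -φ₁ (T - t)) := by ring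
    rw [heq]; exact h3
  have hw' : ∀ t : ℝ, t ≠ δ → T - t ≠ δ → HasDerivAt w (D t) t := by
    intro t h1 h2
    have h3 := (hder_u t).sub (((hφ₁' t h1).add (hφ₁c t h2)).const_mul A)
    have heq : D t = α * (Real.exp (-α*(T-t)) - Real.exp (-α*t)) - A * (ψ t + -ψ (T - t)) := by
      rw [hDdef]; ring
    rw [heq]; exact h3
  -- boundary values
  have hbd : 1 - 2*α*δ = 0 := by linarith
  have hφδ : ∀ x : ℝ, x = δ → x*(1-2*α*x)^3 = 0 := by
    intro x hx; rw [hx, hbd]; ring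
  have hφ₁δ : ∀ x : ℝ, x = δ → (1-2*α*x)^2*(1-8*α*x) = 0 := by
    intro x hx; rw [hx, hbd]; ring
  have hψδ : ∀ x : ℝ, x = δ → (-12*α)*((1-2*α*x)*(1-4*α*x)) = 0 := by
    intro x hx; rw [hx, hbd]; ring
  -- continuity
  have hcφ : Continuous φ := by
    rw [hφdef]
    exact Continuous.if_le (by fun_prop) continuous_const continuous_id continuous_const hφδ
  have hcφ₁ : Continuous φ₁ := by
    rw [hφ₁def]
    exact Continuous.if_le (by fun_prop) continuous_const continuous_id continuous_const hφ₁δ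
  have hcψ : Continuous ψ := by
    rw [hψdef]
    exact Continuous.if_le (by fun_prop) continuous_const continuous_id continuous_const hψδ
  have hcu : Continuous u := by rw [hu]; fun_prop
  have hcv : Continuous v := by
    rw [hvdef]; exact continuous_const.mul (hcφ.sub (hcφ.comp (continuous_const.sub continuous_id)))
  have hcw : Continuous w := by
    rw [hwdef]
    exact hcu.sub (continuous_const.mul (hcφ₁.add (hcφ₁.comp (continuous_const.sub continuous_id))))
  have hcD : Continuous D := by
    rw [hDdef]
    have : Continuous ψ := hcψ
    fun_prop
  -- vanishing of the cutoffs beyond δ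
  have hφ0 : ∀ x : ℝ, δ ≤ x → φ x = 0 := by
    intro x hx
    rw [hφdef]
    by_cases h : x ≤ δ
    · have : x = δ := le_antisymm h hx
      simp only [if_pos h]; exact hφδ x this
    · simp [h]
  have hφ₁0 : ∀ x : ℝ, δ ≤ x → φ₁ x = 0 := by
    intro x hx
    rw [hφ₁def]
    by_cases h : x ≤ δ
    · have : x = δ := le_antisymm h hx
      simp only [if_pos h]; exact hφ₁δ x this
    · simp [h]
  have hψ0 : ∀ x : ℝ, δ ≤ x → ψ x = 0 := by
    intro x hx
    rw [hψdef]
    by_cases h : x ≤ δ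
    · have : x = δ := le_antisymm h hx
      simp only [if_pos h]; exact hψδ x this
    · simp [h]
  -- disjoint supports
  have hprodφ : ∀ t : ℝ, φ t * φ (T - t) = 0 := by
    intro t
    by_cases h : t ≤ δ
    · rw [hφ0 (T - t) (by linarith), mul_zero]
    · rw [hφ0 t (by linarith), zero_mul]
  have hprodφ₁ : ∀ t : ℝ, φ₁ t * φ₁ (T - t) = 0 := by
    intro t
    by_cases h : t ≤ δ
    · rw [hφ₁0 (T - t) (by linarith), mul_zero]
    · rw [hφ₁0 t (by linarith), zero_mul]
  have hprodψ : ∀ t : ℝ, ψ t * ψ (T - t) = 0 := by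
    intro t
    by_cases h : t ≤ δ
    · rw [hψ0 (T - t) (by linarith), mul_zero]
    · rw [hψ0 t (by linarith), zero_mul]
  -- reflected integrals
  have hα' : α ≠ 0 := ne_of_gt hα0
  have hreflφ : (∫ t in (0:ℝ)..T, (φ (T - t))^2) = ∫ t in (0:ℝ)..T, (φ t)^2 := by
    simpa using intervalIntegral.integral_comp_sub_left (a := (0:ℝ)) (b := T) (fun s => (φ s)^2) T
  have hreflφ₁ : (∫ t in (0:ℝ)..T, (φ₁ (T - t))^2) = ∫ t in (0:ℝ)..T, (φ₁ t)^2 := by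
    simpa using intervalIntegral.integral_comp_sub_left (a := (0:ℝ)) (b := T) (fun s => (φ₁ s)^2) T
  have hreflψ : (∫ t in (0:ℝ)..T, (ψ (T - t))^2) = ∫ t in (0:ℝ)..T, (ψ t)^2 := by
    simpa using intervalIntegral.integral_comp_sub_left (a := (0:ℝ)) (b := T) (fun s => (ψ s)^2) T
  -- polynomial integrals
  have hIφ : (∫ t in (0:ℝ)..T, (φ t)^2) = 1/(2016*α^3) := by
    have hsplit := intervalIntegral.integral_add_adjacent_intervals
      (a := (0:ℝ)) (b := δ) (c := T) (f := fun t => (φ t)^2) (μ := volume)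
      ((hcφ.pow 2).intervalIntegrable 0 δ) ((hcφ.pow 2).intervalIntegrable δ T)
    have h1 : (∫ t in (0:ℝ)..δ, (φ t)^2)
        = ∫ t in (0:ℝ)..δ, (0 + 0*t + 1*t^2 + (-12*α)*t^3 + (60*α^2)*t^4 + (-160*α^3)*t^5
            + (240*α^4)*t^6 + (-192*α^5)*t^7 + (64*α^6)*t^8) := by
      apply intervalIntegral.integral_congr
      intro x hx
      dsimp only
      rw [Set.uIcc_of_le hδ0.le] at hx
      have hφx : φ x = x*(1-2*α*x)^3 := by rw [hφdef]; simp only [if_pos hx.2]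
      rw [hφx]; ring
    have h2 : (∫ t in δ..T, (φ t)^2) = 0 := by
      have h2' : (∫ t in δ..T, (φ t)^2) = ∫ t in δ..T, (0:ℝ) := by
        apply intervalIntegral.integral_congr
        intro x hx
        rw [Set.uIcc_of_le hδltT.le] at hx
        simp [hφ0 x hx.1]
      simp [h2']
    rw [← hsplit, h1, h2, integral_poly8, hδdef]
    field_simp
    ring
  have hIφ₁ : (∫ t in (0:ℝ)..T, (φ₁ t)^2) = 3/(70*α) := by
    have hsplit := intervalIntegral.integral_add_adjacent_intervals
      (a := (0:ℝ)) (b := δ) (c := T) (f := fun t => (φ₁ t)^2) (μ := volume)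
      ((hcφ₁.pow 2).intervalIntegrable 0 δ) ((hcφ₁.pow 2).intervalIntegrable δ T)
    have h1 : (∫ t in (0:ℝ)..δ, (φ₁ t)^2)
        = ∫ t in (0:ℝ)..δ, (1 + (-24*α)*t + (216*α^2)*t^2 + (-928*α^3)*t^3 + (2064*α^4)*t^4
            + (-2304*α^5)*t^5 + (1024*α^6)*t^6 + 0*t^7 + 0*t^8) := by
      apply intervalIntegral.integral_congr
      intro x hx
      dsimp only
      rw [Set.uIcc_of_le hδ0.le] at hx
      have hφx : φ₁ x = (1-2*α*x)^2*(1-8*α*x) := by rw [hφ₁def]; simp only [if_pos hx.2]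
      rw [hφx]; ring
    have h2 : (∫ t in δ..T, (φ₁ t)^2) = 0 := by
      have h2' : (∫ t in δ..T, (φ₁ t)^2) = ∫ t in δ..T, (0:ℝ) := by
        apply intervalIntegral.integral_congr
        intro x hx
        rw [Set.uIcc_of_le hδltT.le] at hx
        simp [hφ₁0 x hx.1]
      simp [h2']
    rw [← hsplit, h1, h2, integral_poly8, hδdef]
    field_simp
    ring
  have hIψ : (∫ t in (0:ℝ)..T, (ψ t)^2) = 48*α/5 := by
    have hsplit := intervalIntegral.integral_add_adjacent_intervals
      (a := (0:ℝ)) (b := δ) (c := T) (f := fun t => (ψ t)^2) (μ := volume)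
      ((hcψ.pow 2).intervalIntegrable 0 δ) ((hcψ.pow 2).intervalIntegrable δ T)
    have h1 : (∫ t in (0:ℝ)..δ, (ψ t)^2)
        = ∫ t in (0:ℝ)..δ, ((144*α^2) + (-1728*α^3)*t + (7488*α^4)*t^2 + (-13824*α^5)*t^3
            + (9216*α^6)*t^4 + 0*t^5 + 0*t^6 + 0*t^7 + 0*t^8) := by
      apply intervalIntegral.integral_congr
      intro x hx
      dsimp only
      rw [Set.uIcc_of_le hδ0.le] at hx
      have hφx : ψ x = (-12*α)*((1-2*α*x)*(1-4*α*x)) := by rw [hψdef]; simp only [if_pos hx.2]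
      rw [hφx]; ring
    have h2 : (∫ t in δ..T, (ψ t)^2) = 0 := by
      have h2' : (∫ t in δ..T, (ψ t)^2) = ∫ t in δ..T, (0:ℝ) := by
        apply intervalIntegral.integral_congr
        intro x hx
        rw [Set.uIcc_of_le hδltT.le] at hx
        simp [hψ0 x hx.1]
      simp [h2']
    rw [← hsplit, h1, h2, integral_poly8, hδdef]
    field_simp
    ring
  -- lower bound for the mass of u
  have hX0' : ∀ x : ℝ, (0:ℝ) ≤ (u x)^2 := fun x => sq_nonneg _
  have hIu : 49/(50*α) ≤ ∫ t in (0:ℝ)..T, (u t)^2 := by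
    have hFTC : (∫ t in (0:ℝ)..T, (Real.exp (-(2*α)*t) + Real.exp (-(2*α)*(T-t))))
        = (1 - Real.exp (-(2*α)*T))/α := by
      have hF : ∀ t : ℝ, HasDerivAt
          (fun t => (Real.exp (-(2*α)*(T-t)) - Real.exp (-(2*α)*t))/(2*α))
          (Real.exp (-(2*α)*t) + Real.exp (-(2*α)*(T-t))) t := by
        intro t
        have e1 : HasDerivAt (fun t : ℝ => Real.exp (-(2*α)*t))
            (Real.exp (-(2*α)*t) * (-(2*α))) t := by
          have hi : HasDerivAt (fun t : ℝ => -(2*α)*t) (-(2*α)) t := by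
            simpa using (hasDerivAt_id t).const_mul (-(2*α))
          exact (Real.hasDerivAt_exp _).comp t hi
        have e2 : HasDerivAt (fun t : ℝ => Real.exp (-(2*α)*(T-t)))
            (Real.exp (-(2*α)*(T-t)) * (-(2*α) * -1)) t := by
          have hi : HasDerivAt (fun t : ℝ => -(2*α)*(T-t)) (-(2*α) * -1) t :=
            (hsub t).const_mul (-(2*α))
          exact (Real.hasDerivAt_exp _).comp t hi
        have h3 := (e2.sub e1).div_const (2*α)
        have heq : Real.exp (-(2*α)*t) + Real.exp (-(2*α)*(T-t))
            = (Real.exp (-(2*α)*(T-t)) * (-(2*α) * -1) - Real.exp (-(2*α)*t) * (-(2*α)))/(2*α) := by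
          field_simp
          ring
        rw [heq]; exact h3
      rw [intervalIntegral.integral_eq_sub_of_hasDerivAt (fun x _ => hF x)
        ((by fun_prop :
          Continuous fun t : ℝ => Real.exp (-(2*α)*t) + Real.exp (-(2*α)*(T-t))).intervalIntegrable 0 T)]
      rw [sub_self, sub_zero, mul_zero, Real.exp_zero]
      field_simp
      ring
    have hmono : (∫ t in (0:ℝ)..T, (Real.exp (-(2*α)*t) + Real.exp (-(2*α)*(T-t))))
        ≤ ∫ t in (0:ℝ)..T, (u t)^2 := by
      apply intervalIntegral.integral_mono_on hT.le
        ((by fun_prop : Continuous fun t : ℝ =>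
          Real.exp (-(2*α)*t) + Real.exp (-(2*α)*(T-t))).intervalIntegrable 0 T)
        ((hcu.pow 2).intervalIntegrable 0 T)
      intro x _
      have hux : u x = Real.exp (-α*x) + Real.exp (-α*(T-x)) := by rw [hu]
      have h1 : Real.exp (-(2*α)*x) = Real.exp (-α*x) * Real.exp (-α*x) := by
        rw [← Real.exp_add]; congr 1; ring
      have h2 : Real.exp (-(2*α)*(T-x)) = Real.exp (-α*(T-x)) * Real.exp (-α*(T-x)) := by
        rw [← Real.exp_add]; congr 1; ring
      rw [Pi.pow_apply, hux]
      nlinarith [mul_pos (Real.exp_pos (-α*x)) (Real.exp_pos (-α*(T-x)))]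
    have h1 : Real.exp (-(2*α)*T) ≤ Real.exp (-4 : ℝ) := by
      apply Real.exp_le_exp.2; nlinarith
    have h2 : Real.exp (-4:ℝ) ≤ 1/50 := by
      rw [Real.exp_neg]
      rw [inv_le_comm₀ (by positivity) (by norm_num)]
      have h4 : Real.exp 1 ^ (4:ℕ) = Real.exp 4 := by
        rw [Real.exp_one_pow]; norm_num
      have e2 : (7.38:ℝ) ≤ Real.exp 1 ^ (2:ℕ) := by nlinarith
      have e4 : (54:ℝ) ≤ Real.exp 1 ^ (4:ℕ) := by nlinarith
      have : (1/50:ℝ)⁻¹ = 50 := by norm_num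
      rw [this]
      linarith
    have h3 : 49/(50*α) ≤ (1 - Real.exp (-(2*α)*T))/α := by
      rw [div_le_div_iff₀ (by positivity) hα0]
      nlinarith
    linarith [hFTC ▸ hmono]
  have hX0 : 0 < ∫ t in (0:ℝ)..T, (u t)^2 := lt_of_lt_of_le (by positivity) hIu
  -- integral identities for v and u - w
  have hIv : (∫ t in (0:ℝ)..T, (v t)^2) = 2*A^2*(1/(2016*α^3)) := by
    have h1 : Set.EqOn (fun t => (v t)^2)
        (fun t => A^2*(φ t)^2 + A^2*(φ (T-t))^2) (Set.uIcc 0 T) := by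
      intro x _
      dsimp only
      rw [hvdef]
      dsimp only
      linear_combination (-(2*A^2)) * hprodφ x
    have hcφT : Continuous fun x : ℝ => φ (T - x) := hcφ.comp (continuous_const.sub continuous_id)
    have hadd : (∫ t in (0:ℝ)..T, (A^2*(φ t)^2 + A^2*(φ (T-t))^2))
        = (∫ t in (0:ℝ)..T, A^2*(φ t)^2) + (∫ t in (0:ℝ)..T, A^2*(φ (T-t))^2) :=
      intervalIntegral.integral_add
        ((continuous_const.mul (hcφ.pow 2)).intervalIntegrable 0 T)
        ((continuous_const.mul (hcφT.pow 2)).intervalIntegrable 0 T)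
    rw [intervalIntegral.integral_congr h1, hadd,
      intervalIntegral.integral_const_mul, intervalIntegral.integral_const_mul,
      hreflφ, hIφ]
    ring
  have hIuw : (∫ t in (0:ℝ)..T, (u t - w t)^2) = 2*A^2*(3/(70*α)) := by
    have h1 : Set.EqOn (fun t => (u t - w t)^2)
        (fun t => A^2*(φ₁ t)^2 + A^2*(φ₁ (T-t))^2) (Set.uIcc 0 T) := by
      intro x _
      dsimp only
      rw [hwdef]
      dsimp only
      linear_combination (2*A^2) * hprodφ₁ x
    have hcφ₁T : Continuous fun x : ℝ => φ₁ (T - x) := hcφ₁.comp (continuous_const.sub continuous_id)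
    have hadd : (∫ t in (0:ℝ)..T, (A^2*(φ₁ t)^2 + A^2*(φ₁ (T-t))^2))
        = (∫ t in (0:ℝ)..T, A^2*(φ₁ t)^2) + (∫ t in (0:ℝ)..T, A^2*(φ₁ (T-t))^2) :=
      intervalIntegral.integral_add
        ((continuous_const.mul (hcφ₁.pow 2)).intervalIntegrable 0 T)
        ((continuous_const.mul (hcφ₁T.pow 2)).intervalIntegrable 0 T)
    rw [intervalIntegral.integral_congr h1, hadd,
      intervalIntegral.integral_const_mul, intervalIntegral.integral_const_mul,
      hreflφ₁, hIφ₁]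
    ring
  -- bound for the w integral
  have hIw : (∫ t in (0:ℝ)..T, (w t)^2)
      ≤ 2*(∫ t in (0:ℝ)..T, (u t)^2) + 2*(2*A^2*(3/(70*α))) := by
    have hbw : ∀ x ∈ Set.Icc (0:ℝ) T, (w x)^2 ≤ 2*(u x)^2 + 2*(u x - w x)^2 := by
      intro x _
      nlinarith [sq_nonneg (u x + (u x - w x))]
    have hmono : (∫ t in (0:ℝ)..T, (w t)^2)
        ≤ ∫ t in (0:ℝ)..T, (2*(u t)^2 + 2*(u t - w t)^2) := by
      apply intervalIntegral.integral_mono_on hT.le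
        ((hcw.pow 2).intervalIntegrable 0 T)
        (((continuous_const.mul (hcu.pow 2)).add
          (continuous_const.mul ((hcu.sub hcw).pow 2))).intervalIntegrable 0 T) hbw
    have hadd : (∫ t in (0:ℝ)..T, (2*(u t)^2 + 2*(u t - w t)^2))
        = (∫ t in (0:ℝ)..T, 2*(u t)^2) + (∫ t in (0:ℝ)..T, 2*(u t - w t)^2) :=
      intervalIntegral.integral_add
        ((continuous_const.mul (hcu.pow 2)).intervalIntegrable 0 T)
        ((continuous_const.mul ((hcu.sub hcw).pow 2)).intervalIntegrable 0 T)
    rw [hadd, intervalIntegral.integral_const_mul, intervalIntegral.integral_const_mul,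
      hIuw] at hmono
    exact hmono
  -- bound for the derivative integral
  have hDax : (∫ t in (0:ℝ)..T, (deriv w t)^2) = ∫ t in (0:ℝ)..T, (D t)^2 := by
    apply integral_congr_off_two (c := δ) (d := T - δ)
    intro x _ h1 h2
    have h2' : T - x ≠ δ := fun h => h2 (by linarith)
    rw [(hw' x h1 h2').deriv]
  have hIDbound : (∫ t in (0:ℝ)..T, (D t)^2)
      ≤ 5*α^2*(∫ t in (0:ℝ)..T, (u t)^2) + (5/4)*A^2*(2*(48*α/5)) := by
    have hcψT : Continuous fun x : ℝ => ψ (T - x) := hcψ.comp (continuous_const.sub continuous_id)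
    have hbD : ∀ x ∈ Set.Icc (0:ℝ) T,
        (D x)^2 ≤ 5*α^2*(u x)^2 + (5/4)*A^2*((ψ x)^2 + (ψ (T-x))^2) := by
      intro x _
      have hux : u x = Real.exp (-α*x) + Real.exp (-α*(T-x)) := by rw [hu]
      have hDx : D x = α*(Real.exp (-α*(T-x)) - Real.exp (-α*x)) - A*(ψ x - ψ (T-x)) := by
        rw [hDdef]
      rw [hux, hDx]
      have hee : 0 ≤ α^2 * (Real.exp (-α*x) * Real.exp (-α*(T-x))) := by positivity
      nlinarith [hprodψ x, hee,
        sq_nonneg (2*(α*(Real.exp (-α*(T-x)) - Real.exp (-α*x))) + A*(ψ x - ψ (T-x))/2)]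
    have hmono : (∫ t in (0:ℝ)..T, (D t)^2)
        ≤ ∫ t in (0:ℝ)..T, (5*α^2*(u t)^2 + (5/4)*A^2*((ψ t)^2 + (ψ (T-t))^2)) := by
      apply intervalIntegral.integral_mono_on hT.le
        ((hcD.pow 2).intervalIntegrable 0 T)
        (((continuous_const.mul (hcu.pow 2)).add
          (continuous_const.mul ((hcψ.pow 2).add (hcψT.pow 2)))).intervalIntegrable 0 T) hbD
    have hadd : (∫ t in (0:ℝ)..T, (5*α^2*(u t)^2 + (5/4)*A^2*((ψ t)^2 + (ψ (T-t))^2)))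
        = (∫ t in (0:ℝ)..T, 5*α^2*(u t)^2)
          + (∫ t in (0:ℝ)..T, (5/4)*A^2*((ψ t)^2 + (ψ (T-t))^2)) :=
      intervalIntegral.integral_add
        ((continuous_const.mul (hcu.pow 2)).intervalIntegrable 0 T)
        ((continuous_const.mul ((hcψ.pow 2).add (hcψT.pow 2))).intervalIntegrable 0 T)
    have hadd2 : (∫ t in (0:ℝ)..T, ((ψ t)^2 + (ψ (T-t))^2))
        = (∫ t in (0:ℝ)..T, (ψ t)^2) + (∫ t in (0:ℝ)..T, (ψ (T-t))^2) :=
      intervalIntegral.integral_add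
        ((hcψ.pow 2).intervalIntegrable 0 T) ((hcψT.pow 2).intervalIntegrable 0 T)
    rw [hadd, intervalIntegral.integral_const_mul, intervalIntegral.integral_const_mul,
      hadd2, hreflψ, hIψ] at hmono
    convert hmono using 2
    ring
  -- pointwise values at the endpoints
  have hφat0 : φ 0 = 0 := by
    rw [hφdef]; simp [hδ0.le]
  have hφ₁at0 : φ₁ 0 = 1 := by
    rw [hφ₁def]; norm_num [hδ0.le]
  have hφatT : φ T = 0 := hφ0 T hδltT.le
  have hφ₁atT : φ₁ T = 0 := hφ₁0 T hδltT.le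
  have hu0 : u 0 = A := by rw [hu, hAdef]; norm_num
  have huT : u T = A := by rw [hu, hAdef]; norm_num [add_comm]
  have hsum3 : (2.487:ℝ) ≤ (1 + 1/Real.sqrt 3)^2 := sqrt3_fact
  have hc52 : (41.1:ℝ) ≤ (5 + Real.sqrt 2)^2 := sqrt2_fact
  -- final assembly
  clear_value δ A φ φ₁ ψ v w D
  refine ⟨v, w, {δ, T - δ}, ?_, hcv.continuousOn, hcw.continuousOn, ?_, ?_, ?_, ?_, ?_, ?_, ?_,
    ?_, ?_⟩
  · intro x hx
    simp only [Finset.coe_insert, Finset.coe_singleton, Set.mem_insert_iff,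
      Set.mem_singleton_iff] at hx
    rcases hx with h | h
    · rw [h]; exact ⟨hδ0, hδltT⟩
    · rw [h]; constructor <;> [linarith; linarith]
  · rw [hvdef]; dsimp only; rw [sub_zero, hφat0, hφatT]; ring
  · rw [hvdef]; dsimp only; rw [sub_self, hφat0, hφatT]; ring
  · rw [hwdef]; dsimp only; rw [sub_zero, hφ₁at0, hφ₁atT, hu0]; ring
  · rw [hwdef]; dsimp only; rw [sub_self, hφ₁at0, hφ₁atT, huT]; ring
  · intro t ht
    have hmem := ht.2
    simp only [Finset.coe_insert, Finset.coe_singleton, Set.mem_insert_iff,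
      Set.mem_singleton_iff, not_or] at hmem
    obtain ⟨h1, h2⟩ := hmem
    have h2' : T - t ≠ δ := fun h => h2 (by linarith)
    constructor
    · have heq : u t - w t = A * (φ₁ t + φ₁ (T - t)) := by rw [hwdef]; ring
      rw [heq]
      exact hv' t h1 h2'
    · exact (hw' t h1 h2').differentiableAt
  · -- v bound
    rw [hIv]
    have key : 2*A^2*(1/(2016*α^3)) ≤ 49/(1500*α^3) := by
      rw [show 2*A^2*(1/(2016*α^3)) = (2*A^2)/(2016*α^3) by ring,
        div_le_div_iff₀ (by positivity) (by positivity)]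
      linarith only [mul_le_mul_of_nonneg_right hA2 (le_of_lt (pow_pos hα0 3)), pow_pos hα0 3]
    have heq : 49/(1500*α^3) = 1/(30*α^2)*(49/(50*α)) := by field_simp; ring
    calc 2*A^2*(1/(2016*α^3)) ≤ 49/(1500*α^3) := key
      _ = 1/(30*α^2)*(49/(50*α)) := heq
      _ ≤ 1/(30*α^2) * ∫ t in (0:ℝ)..T, (u t)^2 := by
          apply mul_le_mul_of_nonneg_left hIu (by positivity)
  · -- u - w bound
    rw [hIuw]
    have key : 2*A^2*(3/(70*α)) ≤ 49/(50*α) := by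
      rw [show 2*A^2*(3/(70*α)) = (6*A^2)/(70*α) by ring,
        div_le_div_iff₀ (by positivity) (by positivity)]
      linarith only [mul_le_mul_of_nonneg_right hA2 hα0.le, hα0]
    have h2 : (∫ t in (0:ℝ)..T, (u t)^2) ≤ (1 + 1/Real.sqrt 3)^2 * ∫ t in (0:ℝ)..T, (u t)^2 := by
      linarith only [mul_le_mul_of_nonneg_right hsum3 hX0.le, hX0.le]
    linarith only [hIu, key, h2]
  · -- w bound
    have key : 2*(2*A^2*(3/(70*α))) ≤ 0.487*(49/(50*α)) := by
      rw [show 2*(2*A^2*(3/(70*α))) = (12*A^2)/(70*α) by ring,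
        show (0.487:ℝ)*(49/(50*α)) = (0.487*49)/(50*α) by ring,
        div_le_div_iff₀ (by positivity) (by positivity)]
      linarith only [mul_le_mul_of_nonneg_right hA2 hα0.le, hα0]
    have h2 : (0.487:ℝ)*(49/(50*α)) ≤ 0.487 * ∫ t in (0:ℝ)..T, (u t)^2 :=
      mul_le_mul_of_nonneg_left hIu (by norm_num)
    have h3 : 2*(∫ t in (0:ℝ)..T, (u t)^2) + 0.487*(∫ t in (0:ℝ)..T, (u t)^2)
        ≤ (1 + 1/Real.sqrt 3)^2 * ∫ t in (0:ℝ)..T, (u t)^2 := by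
      linarith only [mul_le_mul_of_nonneg_right hsum3 hX0.le, hX0.le]
    linarith only [hIw, key, h2, h3]
  · -- derivative bound
    rw [hDax]
    have hXα : 49*α/50 ≤ α^2 * ∫ t in (0:ℝ)..T, (u t)^2 := by
      have h1 := mul_le_mul_of_nonneg_left hIu (le_of_lt (mul_pos hα0 hα0))
      have h2 : α*α*(49/(50*α)) = 49*α/50 := by field_simp
      rw [h2] at h1
      calc 49*α/50 ≤ α*α*∫ t in (0:ℝ)..T, (u t)^2 := h1
        _ = α^2*∫ t in (0:ℝ)..T, (u t)^2 := by ring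
    have hstep : (36.1:ℝ)*(49*α/50) ≤ ((5 + Real.sqrt 2)^2 - 5)*(α^2 * ∫ t in (0:ℝ)..T, (u t)^2) := by
      apply mul_le_mul (by linarith) hXα (by positivity) (by linarith)
    have h24 : 24*A^2*α ≤ 24*(64/49)*α := by
      linarith only [mul_le_mul_of_nonneg_right hA2 hα0.le]
    linarith only [hIDbound, hstep, h24, hα0.le]
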